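/- For every natural number n ≥ 0, with T_8 = {12, 1̄2̄, 21̄}, one has b_n(T_8) = 2^{n+1} − (n+1). -/

import Mathlib

/-- A signed permutation of length `n`: a permutation of `Fin n` (the absolute
values) together with a sign (bar) for each position. -/
abbrev SignedPerm (n : ℕ) := Equiv.Perm (Fin n) × (Fin n → Bool)

/-- `α` contains the signed pattern `τ`. -/
def SPContains {n k : ℕ} (α : SignedPerm n) (τ : SignedPerm k) : Prop :=
  ∃ f : Fin k → Fin n, StrictMono f ∧
    (∀ p q : Fin k, τ.1 p < τ.1 q ↔ α.1 (f p) < α.1 (f q)) ∧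
    ∀ j : Fin k, α.2 (f j) = τ.2 j

/-- `α` avoids every pattern in `T`. -/
def AvoidsAll {n k : ℕ} (T : Set (SignedPerm k)) (α : SignedPerm n) : Prop :=
  ∀ τ ∈ T, ¬ SPContains α τ

/-- `bn n T` is the number of signed permutations in `B_n` avoiding all patterns of `T`. -/
noncomputable def bn (n : ℕ) (T : Set (SignedPerm 2)) : ℕ :=
  Nat.card {α : SignedPerm n // AvoidsAll T α}

def p12   : SignedPerm 2 := (Equiv.refl (Fin 2), ![false, false])
def p21   : SignedPerm 2 := (Equiv.swap 0 1,     ![false, false])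
def p12b  : SignedPerm 2 := (Equiv.refl (Fin 2), ![false, true])
def p1b2  : SignedPerm 2 := (Equiv.refl (Fin 2), ![true, false])
def p21b  : SignedPerm 2 := (Equiv.swap 0 1,     ![false, true])
def p2b1  : SignedPerm 2 := (Equiv.swap 0 1,     ![true, false])
def p1b2b : SignedPerm 2 := (Equiv.refl (Fin 2), ![true, true])
def p2b1b : SignedPerm 2 := (Equiv.swap 0 1,     ![true, true])

namespace Stmt10
open Finset
variable {n : ℕ}

def Good (α : SignedPerm n) : Prop := ∀ i j : Fin n, i < j →
  (α.2 i = α.2 j → α.1 j < α.1 i) ∧ (α.2 i = false → α.2 j = true → α.1 i < α.1 j)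

lemma strictMono_pair {i j : Fin n} (h : i < j) : StrictMono ![i, j] := by
  intro a b hab
  fin_cases a <;> fin_cases b <;> simp_all

lemma ord_refl_pair {v : Fin n → Fin n} {i j : Fin n} (h : v i < v j) :
    ∀ p q : Fin 2, (Equiv.refl (Fin 2)) p < (Equiv.refl (Fin 2)) q ↔ v (![i,j] p) < v (![i,j] q) := by
  intro p q
  fin_cases p <;> fin_cases q <;> simp [h, h.asymm]

lemma ord_swap_pair {v : Fin n → Fin n} {i j : Fin n} (h : v j < v i) :
    ∀ p q : Fin 2, (Equiv.swap 0 1 : Equiv.Perm (Fin 2)) p < (Equiv.swap 0 1 : Equiv.Perm (Fin 2)) q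
      ↔ v (![i,j] p) < v (![i,j] q) := by
  intro p q
  fin_cases p <;> fin_cases q <;>
    simp [Equiv.swap_apply_left, Equiv.swap_apply_right, h, h.asymm]

lemma avoids_iff_good (α : SignedPerm n) :
    AvoidsAll {p12, p1b2b, p21b} α ↔ Good α := by
  constructor
  · intro hA i j hij
    have h12 := hA p12 (by simp)
    have h1b2b := hA p1b2b (by simp)
    have h21b := hA p21b (by simp)
    have hne : α.1 i ≠ α.1 j := fun h => absurd (α.1.injective h) (ne_of_lt hij)
    constructor
    · intro hs
      rcases Bool.eq_false_or_eq_true (α.2 i) with hb | hb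
      · by_contra hlt
        have hij' : α.1 i < α.1 j := lt_of_le_of_ne (not_lt.mp hlt) hne
        exact h1b2b ⟨![i,j], strictMono_pair hij, ord_refl_pair hij',
          by intro t; fin_cases t <;> simp [p1b2b, hb, ← hs, hb]⟩
      · by_contra hlt
        have hij' : α.1 i < α.1 j := lt_of_le_of_ne (not_lt.mp hlt) hne
        exact h12 ⟨![i,j], strictMono_pair hij, ord_refl_pair hij',
          by intro t; fin_cases t <;> simp [p12, hb, ← hs, hb]⟩
    · intro hbi hbj
      by_contra hlt
      have hij' : α.1 j < α.1 i := lt_of_le_of_ne (not_lt.mp hlt) (Ne.symm hne)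
      exact h21b ⟨![i,j], strictMono_pair hij, ord_swap_pair hij',
        by intro t; fin_cases t <;> simp [p21b, hbi, hbj]⟩
  · rintro hG τ hτ ⟨f, hf, hord, hs⟩
    have h01 : f 0 < f 1 := hf (by decide : (0:Fin 2) < 1)
    have hGf := hG (f 0) (f 1) h01
    rcases hτ with rfl | rfl | rfl
    · have hv : α.1 (f 0) < α.1 (f 1) := (hord 0 1).mp (by decide)
      have hb0 := hs 0; have hb1 := hs 1
      simp [p12] at hb0 hb1
      exact absurd (hGf.1 (by rw [hb0, hb1])) (not_lt.mpr (le_of_lt hv))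
    · have hv : α.1 (f 0) < α.1 (f 1) := (hord 0 1).mp (by decide)
      have hb0 := hs 0; have hb1 := hs 1
      simp [p1b2b] at hb0 hb1
      exact absurd (hGf.1 (by rw [hb0, hb1])) (not_lt.mpr (le_of_lt hv))
    · have hv : α.1 (f 1) < α.1 (f 0) := (hord 1 0).mp (by decide)
      have hb0 := hs 0; have hb1 := hs 1
      simp [p21b] at hb0 hb1
      exact absurd (hGf.2 hb0 hb1) (not_lt.mpr (le_of_lt hv))

def IsDown (P : Finset (Fin n)) : Prop := ∀ ⦃a⦄, a ∈ P → ∀ ⦃b⦄, b ≤ a → b ∈ P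
def IsTop  (S : Finset (Fin n)) : Prop := ∀ ⦃a⦄, a ∈ S → ∀ ⦃b⦄, b ∉ S → b < a

def dSet (n k : ℕ) : Finset (Fin n) := univ.filter (fun x => (x : ℕ) < k)
def tSet (n k : ℕ) : Finset (Fin n) := univ.filter (fun x => n - k ≤ (x : ℕ))

lemma card_dSet {k : ℕ} (hk : k ≤ n) : (dSet n k).card = k := by
  have h : (dSet n k).card = (Finset.range k).card := by
    refine card_bij' (s := dSet n k) (t := Finset.range k)
      (fun a _ => (a : ℕ))
      (fun b hb => (⟨b, lt_of_lt_of_le (mem_range.mp hb) hk⟩ : Fin n)) ?_ ?_ ?_ ?_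
    · intro a ha; exact mem_range.mpr (by simpa [dSet] using ha)
    · intro b hb; simp [dSet, mem_range.mp hb]
    · intro a ha; simp
    · intro b hb; simp
  simpa using h

lemma card_tSet {k : ℕ} (hk : k ≤ n) : (tSet n k).card = k := by
  have h : (tSet n k).card = (Finset.range k).card := by
    refine card_bij' (s := tSet n k) (t := Finset.range k)
      (fun a _ => (a : ℕ) - (n - k))
      (fun b hb => (⟨n - k + b, by have := mem_range.mp hb; omega⟩ : Fin n)) ?_ ?_ ?_ ?_
    · intro a ha
      have h1 : n - k ≤ (a : ℕ) := by simpa [tSet] using ha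
      have h2 : (a : ℕ) < n := a.isLt
      have h3 : (a : ℕ) - (n - k) < k := by omega
      simpa using h3
    · intro b hb; simp [tSet]; omega
    · intro a ha
      have h1 : n - k ≤ (a : ℕ) := by simpa [tSet] using ha
      apply Fin.ext; simp; omega
    · intro b hb; simp
  simpa using h

lemma isDown_dSet (k : ℕ) : IsDown (dSet n k) := by
  intro a ha b hb
  simp only [dSet, mem_filter, mem_univ, true_and] at *
  exact lt_of_le_of_lt hb ha

lemma isTop_tSet (k : ℕ) : IsTop (tSet n k) := by
  intro a ha b hb
  simp only [tSet, mem_filter, mem_univ, true_and, not_le] at *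
  exact Fin.lt_def.mpr (lt_of_lt_of_le hb ha)

lemma IsDown.eq_dSet {P : Finset (Fin n)} (hP : IsDown P) : P = dSet n P.card := by
  ext x
  simp only [dSet, mem_filter, mem_univ, true_and]
  constructor
  · intro hx
    have hsub : Finset.Iic x ⊆ P := fun y hy => hP hx (mem_Iic.mp hy)
    have := card_le_card hsub
    rw [Fin.card_Iic] at this
    omega
  · intro hx
    by_contra hxP
    have hsub : P ⊆ Finset.Iio x := by
      intro y hy
      rcases lt_or_ge y x with h | h
      · exact mem_Iio.mpr h
      · exact absurd (hP hy h) hxP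
    have := card_le_card hsub
    rw [Fin.card_Iio] at this
    omega

lemma isTop_iff_isDown_compl {S : Finset (Fin n)} : IsTop S ↔ IsDown Sᶜ := by
  constructor
  · intro h a ha b hb
    simp only [mem_compl] at *
    intro hbS
    exact absurd (lt_of_lt_of_le (h hbS ha) hb).false (by simp)
  · intro h a ha b hb
    rcases lt_or_ge b a with h' | h'
    · exact h'
    · exact absurd (h (mem_compl.mpr hb) h') (by simp [ha])

lemma IsTop.eq_tSet {S : Finset (Fin n)} (hS : IsTop S) : S = tSet n S.card := by
  have h1 : Sᶜ = dSet n (n - S.card) := by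
    have := (isTop_iff_isDown_compl.mp hS).eq_dSet
    rwa [card_compl, Fintype.card_fin] at this
  have h3 : (dSet n (n - S.card))ᶜ = tSet n S.card := by
    ext x
    simp only [dSet, tSet, mem_compl, mem_filter, mem_univ, true_and, not_lt]
  rw [← h3, ← h1, compl_compl]

lemma card_le_n {P : Finset (Fin n)} : P.card ≤ n := by
  simpa using card_le_univ P

attribute [local instance] Classical.propDecidable

theorem card_pairs :
    Nat.card {ps : Finset (Fin n) × Finset (Fin n) //
      ps.1.card = ps.2.card ∧ (IsDown ps.1 ∨ IsTop ps.2)} = 2 ^ (n + 1) - (n + 1) := by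
  rw [Nat.card_eq_fintype_card, Fintype.card_subtype]
  have hsplit : (univ.filter (fun ps : Finset (Fin n) × Finset (Fin n) =>
        ps.1.card = ps.2.card ∧ (IsDown ps.1 ∨ IsTop ps.2)))
      = (univ.filter (fun ps => ps.1.card = ps.2.card ∧ IsDown ps.1))
        ∪ (univ.filter (fun ps => ps.1.card = ps.2.card ∧ IsTop ps.2)) := by
    rw [← filter_or]
    apply filter_congr
    intro ps _
    constructor
    · rintro ⟨h1, h2 | h2⟩
      · exact Or.inl ⟨h1, h2⟩
      · exact Or.inr ⟨h1, h2⟩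
    · rintro (⟨h1, h2⟩ | ⟨h1, h2⟩)
      · exact ⟨h1, Or.inl h2⟩
      · exact ⟨h1, Or.inr h2⟩
  rw [hsplit]
  have hA : (univ.filter (fun ps : Finset (Fin n) × Finset (Fin n) =>
      ps.1.card = ps.2.card ∧ IsDown ps.1)).card
      = (univ : Finset (Finset (Fin n))).card := by
    refine card_bij' (fun ps _ => ps.2) (fun S _ => (dSet n S.card, S)) ?_ ?_ ?_ ?_
    · intro ps _; exact mem_univ _
    · intro S _
      simp only [mem_filter, mem_univ, true_and]
      exact ⟨card_dSet card_le_n, isDown_dSet _⟩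
    · intro ps hps
      simp only [mem_filter] at hps
      obtain ⟨P, S⟩ := ps
      obtain ⟨-, h1, h2⟩ := hps
      have hPd : P = dSet n S.card := by rw [← h1]; exact h2.eq_dSet
      simp only [Prod.mk.injEq]
      exact ⟨hPd.symm, trivial⟩
    · intro S _; rfl
  have hB : (univ.filter (fun ps : Finset (Fin n) × Finset (Fin n) =>
      ps.1.card = ps.2.card ∧ IsTop ps.2)).card
      = (univ : Finset (Finset (Fin n))).card := by
    refine card_bij' (fun ps _ => ps.1) (fun P _ => (P, tSet n P.card)) ?_ ?_ ?_ ?_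
    · intro ps _; exact mem_univ _
    · intro P _
      simp only [mem_filter, mem_univ, true_and]
      exact ⟨(card_tSet card_le_n).symm, isTop_tSet _⟩
    · intro ps hps
      simp only [mem_filter] at hps
      obtain ⟨P, S⟩ := ps
      obtain ⟨-, h1, h2⟩ := hps
      have hSt : S = tSet n P.card := by rw [h1]; exact h2.eq_tSet
      simp only [Prod.mk.injEq]
      exact ⟨trivial, hSt.symm⟩
    · intro S _; rfl
  have hAB : ((univ.filter (fun ps : Finset (Fin n) × Finset (Fin n) =>
        ps.1.card = ps.2.card ∧ IsDown ps.1))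
      ∩ (univ.filter (fun ps => ps.1.card = ps.2.card ∧ IsTop ps.2))).card
      = (Finset.range (n+1)).card := by
    rw [← filter_and]
    refine card_bij' (fun ps _ => ps.1.card) (fun k _ => (dSet n k, tSet n k)) ?_ ?_ ?_ ?_
    · intro ps hps
      exact mem_range.mpr (Nat.lt_succ_of_le card_le_n)
    · intro k hk
      have hk' : k ≤ n := Nat.lt_succ_iff.mp (mem_range.mp hk)
      simp only [mem_filter, mem_univ, true_and]
      exact ⟨⟨by rw [card_dSet hk', card_tSet hk'], isDown_dSet _⟩,
        by rw [card_dSet hk', card_tSet hk'], isTop_tSet _⟩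
    · intro ps hps
      simp only [mem_filter] at hps
      obtain ⟨P, S⟩ := ps
      obtain ⟨-, ⟨h1, h2⟩, h3, h4⟩ := hps
      have e1 : P = dSet n P.card := h2.eq_dSet
      have e2 : S = tSet n P.card := by rw [h1]; exact h4.eq_tSet
      simp only [Prod.mk.injEq]
      exact ⟨e1.symm, e2.symm⟩
    · intro k hk
      have hk' : k ≤ n := Nat.lt_succ_iff.mp (mem_range.mp hk)
      exact card_dSet hk'
  have key := card_union_add_card_inter
    (univ.filter (fun ps : Finset (Fin n) × Finset (Fin n) =>
      ps.1.card = ps.2.card ∧ IsDown ps.1))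
    (univ.filter (fun ps => ps.1.card = ps.2.card ∧ IsTop ps.2))
  rw [hA, hB, hAB] at key
  rw [Finset.card_univ, Fintype.card_finset, Fintype.card_fin, Finset.card_range] at key
  have hpow : 2 ^ n + 2 ^ n = 2 ^ (n + 1) := by ring
  omega

/-- canonical antitone bijection `A → B` -/
def canon (A B : Finset (Fin n)) (h : B.card = A.card) (a : Fin n) (ha : a ∈ A) : Fin n :=
  ↑(B.orderIsoOfFin h (Fin.rev ((A.orderIsoOfFin rfl).symm ⟨a, ha⟩)))

lemma canon_mem {A B : Finset (Fin n)} (h : B.card = A.card) {a : Fin n} (ha : a ∈ A) :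
    canon A B h a ha ∈ B := (B.orderIsoOfFin h _).2

lemma canon_anti {A B : Finset (Fin n)} (h : B.card = A.card) {a1 a2 : Fin n}
    (h1 : a1 ∈ A) (h2 : a2 ∈ A) (hlt : a1 < a2) :
    canon A B h a2 h2 < canon A B h a1 h1 := by
  unfold canon
  apply Subtype.coe_lt_coe.mpr
  apply (B.orderIsoOfFin h).lt_iff_lt.mpr
  apply Fin.rev_lt_rev.mpr
  apply (A.orderIsoOfFin rfl).symm.lt_iff_lt.mpr
  exact Subtype.mk_lt_mk.mpr hlt

lemma eq_canon {A B : Finset (Fin n)} (h : B.card = A.card) (f : Fin n → Fin n)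
    (hmem : ∀ a, a ∈ A → f a ∈ B)
    (hanti : ∀ a1, a1 ∈ A → ∀ a2, a2 ∈ A → a1 < a2 → f a2 < f a1)
    {a : Fin n} (ha : a ∈ A) : f a = canon A B h a ha := by
  set eA := A.orderIsoOfFin (rfl : A.card = A.card) with heA
  set eB := B.orderIsoOfFin h with heB
  set φ : Fin A.card → Fin A.card :=
    fun i => Fin.rev (eB.symm ⟨f (eA i), hmem _ (eA i).2⟩) with hφdef
  have hφ : StrictMono φ := by
    intro i j hij
    have h1 : (eA i : Fin n) < (eA j : Fin n) :=
      Subtype.coe_lt_coe.mpr (eA.lt_iff_lt.mpr hij)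
    have h2 : f (eA j) < f (eA i) := hanti _ (eA i).2 _ (eA j).2 h1
    exact Fin.rev_lt_rev.mpr (eB.symm.lt_iff_lt.mpr (Subtype.mk_lt_mk.mpr h2))
  have hid : φ = id := by
    have hsurj : Function.Surjective φ := Finite.injective_iff_surjective.mp hφ.injective
    exact (hφ.range_inj strictMono_id).mp
      (by rw [Set.range_id, Set.range_eq_univ.mpr hsurj])
  set i0 : Fin A.card := eA.symm ⟨a, ha⟩ with hi0
  have haa : ((eA i0 : {x // x ∈ A}) : Fin n) = a := by
    rw [hi0, eA.apply_symm_apply]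
  have hsub : (⟨f (eA i0), hmem _ (eA i0).2⟩ : {x // x ∈ B}) = ⟨f a, hmem a ha⟩ :=
    Subtype.ext (congrArg f haa)
  have h0 : φ i0 = i0 := by rw [hid]; rfl
  rw [hφdef] at h0
  simp only at h0
  rw [hsub] at h0
  have h1 : eB.symm ⟨f a, hmem a ha⟩ = Fin.rev i0 := by
    rw [← h0, Fin.rev_rev]
  have h2 : (⟨f a, hmem a ha⟩ : {x // x ∈ B}) = eB (Fin.rev i0) := by
    rw [← h1, eB.apply_symm_apply]
  have := congrArg Subtype.val h2
  simpa [canon, hi0, heB] using this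

lemma compl_card {P S : Finset (Fin n)} (h : P.card = S.card) : Sᶜ.card = Pᶜ.card := by
  rw [card_compl, card_compl, h]

def mkFun (P S : Finset (Fin n)) (h : P.card = S.card) : Fin n → Fin n := fun a =>
  if ha : a ∈ P then canon P S h.symm a ha
  else canon Pᶜ Sᶜ (compl_card h) a (mem_compl.mpr ha)

lemma mkFun_pos {P S : Finset (Fin n)} (h : P.card = S.card) {a : Fin n} (ha : a ∈ P) :
    mkFun P S h a = canon P S h.symm a ha := dif_pos ha

lemma mkFun_neg {P S : Finset (Fin n)} (h : P.card = S.card) {a : Fin n} (ha : a ∉ P) :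
    mkFun P S h a = canon Pᶜ Sᶜ (compl_card h) a (mem_compl.mpr ha) := dif_neg ha

lemma mkFun_mem_of_mem {P S : Finset (Fin n)} (h : P.card = S.card) {a : Fin n} (ha : a ∈ P) :
    mkFun P S h a ∈ S := by
  rw [mkFun, dif_pos ha]; exact canon_mem _ _

lemma mkFun_mem_of_not_mem {P S : Finset (Fin n)} (h : P.card = S.card) {a : Fin n}
    (ha : a ∉ P) : mkFun P S h a ∉ S := by
  rw [mkFun_neg h ha]
  exact mem_compl.mp (canon_mem _ _)

lemma mkFun_inj {P S : Finset (Fin n)} (h : P.card = S.card) :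
    Function.Injective (mkFun P S h) := by
  intro a b hab
  by_contra hne
  by_cases ha : a ∈ P <;> by_cases hb : b ∈ P
  · rcases lt_or_gt_of_ne hne with hlt | hlt
    · rw [mkFun_pos h ha, mkFun_pos h hb] at hab
      exact absurd hab (ne_of_gt (canon_anti _ ha hb hlt))
    · rw [mkFun_pos h ha, mkFun_pos h hb] at hab
      exact absurd hab (ne_of_lt (canon_anti _ hb ha hlt))
  · exact absurd (hab ▸ mkFun_mem_of_mem h ha) (mkFun_mem_of_not_mem h hb)
  · exact absurd (hab.symm ▸ mkFun_mem_of_mem h hb) (mkFun_mem_of_not_mem h ha)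
  · rcases lt_or_gt_of_ne hne with hlt | hlt
    · rw [mkFun_neg h ha, mkFun_neg h hb] at hab
      exact absurd hab (ne_of_gt (canon_anti _ (mem_compl.mpr ha) (mem_compl.mpr hb) hlt))
    · rw [mkFun_neg h ha, mkFun_neg h hb] at hab
      exact absurd hab (ne_of_lt (canon_anti _ (mem_compl.mpr hb) (mem_compl.mpr ha) hlt))

noncomputable def mkSigned (P S : Finset (Fin n)) (h : P.card = S.card) : SignedPerm n :=
  (Equiv.ofBijective _ (Finite.injective_iff_bijective.mp (mkFun_inj h)),
   fun a => decide (a ∈ P))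

lemma mkSigned_fst {P S : Finset (Fin n)} (h : P.card = S.card) (a : Fin n) :
    (mkSigned P S h).1 a = mkFun P S h a := rfl

lemma mkSigned_good {P S : Finset (Fin n)} (h : P.card = S.card)
    (hDT : IsDown P ∨ IsTop S) : Good (mkSigned P S h) := by
  intro i j hij
  constructor
  · intro hs
    simp only [mkSigned, decide_eq_decide] at hs
    rw [mkSigned_fst, mkSigned_fst]
    by_cases hi : i ∈ P
    · have hj : j ∈ P := hs.mp hi
      rw [mkFun_pos h hi, mkFun_pos h hj]
      exact canon_anti _ hi hj hij
    · have hj : j ∉ P := fun hj => hi (hs.mpr hj)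
      rw [mkFun_neg h hi, mkFun_neg h hj]
      exact canon_anti _ (mem_compl.mpr hi) (mem_compl.mpr hj) hij
  · intro hi hj
    simp only [mkSigned, decide_eq_false_iff_not, decide_eq_true_eq] at hi hj
    rcases hDT with hD | hT
    · exact absurd (hD hj (le_of_lt hij)) hi
    · exact hT (mkFun_mem_of_mem h hj) (mkFun_mem_of_not_mem h hi)

def posSet (α : SignedPerm n) : Finset (Fin n) := univ.filter (fun i => α.2 i = true)
def valSet (α : SignedPerm n) : Finset (Fin n) := (posSet α).image α.1

lemma card_valSet (α : SignedPerm n) : (posSet α).card = (valSet α).card :=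
  (Finset.card_image_of_injective _ α.1.injective).symm

lemma posSet_mkSigned {P S : Finset (Fin n)} (h : P.card = S.card) :
    posSet (mkSigned P S h) = P := by
  ext i
  simp [posSet, mkSigned]

lemma valSet_mkSigned {P S : Finset (Fin n)} (h : P.card = S.card) :
    valSet (mkSigned P S h) = S := by
  have hsub : valSet (mkSigned P S h) ⊆ S := by
    intro x hx
    rw [valSet, posSet_mkSigned] at hx
    obtain ⟨a, ha, rfl⟩ := mem_image.mp hx
    exact mkFun_mem_of_mem h ha
  apply Finset.eq_of_subset_of_card_le hsub
  rw [← card_valSet, posSet_mkSigned, h]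

lemma key_lt {α : SignedPerm n} (hG : Good α) {j i : Fin n} (hji : j < i)
    (hj : α.2 j = false) (hi : α.2 i = true) :
    ∀ p q, α.2 p = true → α.2 q = false → α.1 q < α.1 p := by
  intro p q hp hq
  rcases lt_trichotomy q p with hqp | rfl | hpq
  · exact (hG q p hqp).2 hq hp
  · rw [hp] at hq; cases hq
  · rcases lt_or_ge j q with hjq | hqj
    · have hqj' : α.1 q < α.1 j := (hG j q hjq).1 (by rw [hj, hq])
      rcases lt_trichotomy j p with hjp | rfl | hpj
      · exact hqj'.trans ((hG j p hjp).2 hj hp)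
      · rw [hj] at hp; cases hp
      · have h1 : α.1 j < α.1 i := (hG j i hji).2 hj hi
        have h2 : α.1 i < α.1 p := (hG p i (hpj.trans hji)).1 (by rw [hp, hi])
        exact hqj'.trans (h1.trans h2)
    · have h1 : α.1 q < α.1 i := (hG q i (lt_of_le_of_lt hqj hji)).2 hq hi
      have h2 : α.1 i < α.1 p :=
        (hG p i (lt_of_lt_of_le hpq (hqj.trans (le_of_lt hji)))).1 (by rw [hp, hi])
      exact h1.trans h2

lemma down_or_top {α : SignedPerm n} (hG : Good α) :
    IsDown (posSet α) ∨ IsTop (valSet α) := by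
  by_cases hD : IsDown (posSet α)
  · exact Or.inl hD
  · right
    simp only [IsDown, not_forall] at hD
    obtain ⟨i, hi, j, hji, hj⟩ := hD
    simp only [posSet, mem_filter, mem_univ, true_and] at hi hj
    have hji' : j < i := lt_of_le_of_ne hji (fun h => hj (h ▸ hi))
    have hjf : α.2 j = false := by
      cases hb : α.2 j
      · rfl
      · exact absurd hb hj
    intro a ha b hb
    obtain ⟨p, hp, rfl⟩ := mem_image.mp ha
    simp only [posSet, mem_filter, mem_univ, true_and] at hp
    set q := α.1.symm b with hq
    have hqb : α.1 q = b := α.1.apply_symm_apply b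
    have hqf : α.2 q = false := by
      cases hbq : α.2 q
      · rfl
      · exfalso
        apply hb
        rw [← hqb]
        exact mem_image_of_mem _ (by simp [posSet, hbq])
    rw [← hqb]
    exact key_lt hG hji' hjf hi p q hp hqf

lemma good_eq_mkSigned {α : SignedPerm n} (hG : Good α) :
    α = mkSigned (posSet α) (valSet α) (card_valSet α) := by
  have hmemP : ∀ a, a ∈ posSet α → α.1 a ∈ valSet α := fun a ha => mem_image_of_mem _ ha
  have hmemPc : ∀ a, a ∈ (posSet α)ᶜ → α.1 a ∈ (valSet α)ᶜ := by
    intro a ha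
    rw [mem_compl] at ha ⊢
    intro hv
    obtain ⟨p, hp, hpa⟩ := mem_image.mp hv
    exact ha ((α.1.injective hpa) ▸ hp)
  have hsign : ∀ a, a ∈ posSet α ↔ α.2 a = true := by
    intro a; simp [posSet]
  apply Prod.ext
  · apply Equiv.ext
    intro a
    rw [mkSigned_fst]
    by_cases ha : a ∈ posSet α
    · rw [mkFun_pos _ ha]
      exact eq_canon _ α.1 hmemP
        (fun a1 h1 a2 h2 hlt => (hG a1 a2 hlt).1
          (by rw [(hsign a1).mp h1, (hsign a2).mp h2])) ha
    · rw [mkFun_neg _ ha]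
      refine eq_canon _ α.1 hmemPc ?_ (mem_compl.mpr ha)
      intro a1 h1 a2 h2 hlt
      rw [mem_compl] at h1 h2
      refine (hG a1 a2 hlt).1 ?_
      have e1 : α.2 a1 = false := by
        cases hb : α.2 a1
        · rfl
        · exact absurd ((hsign a1).mpr hb) h1
      have e2 : α.2 a2 = false := by
        cases hb : α.2 a2
        · rfl
        · exact absurd ((hsign a2).mpr hb) h2
      rw [e1, e2]
  · funext a
    simp only [mkSigned]
    cases hb : α.2 a
    · simp [posSet, hb]
    · simp [posSet, hb]

attribute [local instance] Classical.propDecidable in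
theorem main_count (n : ℕ) :
    Nat.card {α : SignedPerm n // Good α} = 2 ^ (n + 1) - (n + 1) := by
  have hbij : Function.Bijective (fun x : {ps : Finset (Fin n) × Finset (Fin n) //
      ps.1.card = ps.2.card ∧ (IsDown ps.1 ∨ IsTop ps.2)} =>
      (⟨mkSigned x.1.1 x.1.2 x.2.1, mkSigned_good x.2.1 x.2.2⟩ : {α : SignedPerm n // Good α})) := by
    constructor
    · rintro ⟨⟨P, S⟩, hc, hdt⟩ ⟨⟨P', S'⟩, hc', hdt'⟩ heq
      dsimp only at hc hdt hc' hdt'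
      simp only [Subtype.mk.injEq] at heq
      have hP : P = P' := by rw [← posSet_mkSigned hc, ← posSet_mkSigned hc', heq]
      have hS : S = S' := by rw [← valSet_mkSigned hc, ← valSet_mkSigned hc', heq]
      subst hP; subst hS; rfl
    · rintro ⟨α, hG⟩
      refine ⟨⟨(posSet α, valSet α), card_valSet α, down_or_top hG⟩, ?_⟩
      exact Subtype.ext (good_eq_mkSigned hG).symm
  rw [Nat.card_congr (Equiv.ofBijective _ hbij).symm]
  exact card_pairs

end Stmt10

open Stmt10 in
/-- b_n(T₈) with T₈ = {12,1̄2̄,21̄} equals 2^{n+1} − (n+1). -/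
theorem stmt10 (n : ℕ) :
    bn n {p12, p1b2b, p21b} = 2 ^ (n + 1) - (n + 1) := by
  rw [bn, Nat.card_congr (Equiv.subtypeEquivRight (fun α => avoids_iff_good α))]
  exact main_count n
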